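/- arXiv:1610.09967 — 2 statements merged into one kernel-verified Lean document; each statement's English description precedes it below -/
import Mathlib

section
/- (Duality between the quantum-limited amplifier and attenuator, Fock-diagonal form.) Let κ > 1. For every sequence x : ℕ → ℝ with ∑_{n=0}^∞ |x_n| < ∞ and every bounded sequence y : ℕ → ℝ, all the series below converge absolutely and κ ∑_{k=0}^∞ y_k [A_κ(x)]_k = ∑_{n=0}^∞ [T_{1/κ}(y)]_n x_n. -/
/-- The thinning with parameter `l` acting on real sequences:
`[T_l(x)]_n = ∑_{k} C(k,n) l^n (1-l)^{k-n} x_k`. -/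
noncomputable def thinR (l : ℝ) (x : ℕ → ℝ) : ℕ → ℝ :=
  fun n => ∑' k : ℕ, (Nat.choose k n : ℝ) * l ^ n * (1 - l) ^ (k - n) * x k

/-- The discrete quantum-limited amplifier with parameter `κ`, acting on real sequences:
`[A_κ(x)]_k = ∑_{n=0}^k C(k,n) (κ-1)^{k-n} κ^{-(k+1)} x_n`. -/
noncomputable def ampR (κ : ℝ) (x : ℕ → ℝ) : ℕ → ℝ :=
  fun k => ∑ n ∈ Finset.range (k + 1),
    (Nat.choose k n : ℝ) * (κ - 1) ^ (k - n) * κ⁻¹ ^ (k + 1) * x n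

/-- Negative binomial series: `∑_{k} C(k,n) q^{k-n} = (1-q)^{-(n+1)}` for `0 ≤ q < 1`. -/
lemma negBinom_hasSum (n : ℕ) {q : ℝ} (hq0 : 0 ≤ q) (hq1 : q < 1) :
    HasSum (fun k : ℕ => (Nat.choose k n : ℝ) * q ^ (k - n)) (1 / (1 - q) ^ (n + 1)) := by
  have hr : ‖q‖ < 1 := by rw [Real.norm_eq_abs, abs_of_nonneg hq0]; exact hq1
  have h := hasSum_choose_mul_geometric_of_norm_lt_one (𝕜 := ℝ) n hr
  have hz : ∑ i ∈ Finset.range n, (Nat.choose i n : ℝ) * q ^ (i - n) = 0 := by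
    apply Finset.sum_eq_zero
    intro i hi
    rw [Nat.choose_eq_zero_of_lt (Finset.mem_range.mp hi)]
    simp
  rw [← hasSum_nat_add_iff' n, hz, sub_zero]
  simpa [Nat.add_sub_cancel] using h

theorem amplifier_attenuator_duality (κ : ℝ) (hκ : 1 < κ) (x y : ℕ → ℝ)
    (hx : Summable (fun n => |x n|)) (hy : ∃ C, ∀ n, |y n| ≤ C) :
    (∀ n, Summable (fun k : ℕ =>
        |(Nat.choose k n : ℝ) * (1 / κ) ^ n * (1 - 1 / κ) ^ (k - n) * y k|)) ∧
    Summable (fun k => |y k * ampR κ x k|) ∧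
    Summable (fun n => |thinR (1 / κ) y n * x n|) ∧
    κ * ∑' k : ℕ, y k * ampR κ x k = ∑' n : ℕ, thinR (1 / κ) y n * x n := by
  obtain ⟨C, hC⟩ := hy
  have hκ0 : (0 : ℝ) < κ := lt_trans one_pos hκ
  have hp0 : (0 : ℝ) < 1 / κ := by positivity
  have hp1 : 1 / κ < 1 := by rw [div_lt_one hκ0]; exact hκ
  have hq0 : (0 : ℝ) ≤ 1 - 1 / κ := by linarith
  have hq1 : 1 - 1 / κ < 1 := by linarith
  have hC0 : (0 : ℝ) ≤ C := le_trans (abs_nonneg _) (hC 0)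
  -- the negative binomial sum for q = 1 - 1/κ
  have hNB : ∀ n : ℕ, HasSum (fun k : ℕ =>
      (Nat.choose k n : ℝ) * (1 - 1 / κ) ^ (k - n)) (κ ^ (n + 1)) := by
    intro n
    have := negBinom_hasSum n hq0 hq1
    have h1 : (1 : ℝ) - (1 - 1 / κ) = 1 / κ := by ring
    rw [h1] at this
    convert this using 1
    rw [div_pow, one_pow, one_div, one_div, inv_inv]
  -- first conjunct
  have h1 : ∀ n, Summable (fun k : ℕ =>
      |(Nat.choose k n : ℝ) * (1 / κ) ^ n * (1 - 1 / κ) ^ (k - n) * y k|) := by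
    intro n
    refine Summable.of_nonneg_of_le (fun k => abs_nonneg _) (fun k => ?_)
      (((hNB n).summable).mul_left (C * (1 / κ) ^ n))
    · rw [abs_mul, abs_mul, abs_mul]
      rw [abs_of_nonneg (by positivity : (0:ℝ) ≤ (Nat.choose k n : ℝ)),
        abs_of_nonneg (by positivity : (0:ℝ) ≤ (1/κ) ^ n),
        abs_of_nonneg (pow_nonneg hq0 _)]
      have := hC k
      calc (Nat.choose k n : ℝ) * (1 / κ) ^ n * (1 - 1 / κ) ^ (k - n) * |y k|
          ≤ (Nat.choose k n : ℝ) * (1 / κ) ^ n * (1 - 1 / κ) ^ (k - n) * C := by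
            apply mul_le_mul_of_nonneg_left this (by positivity)
        _ = (C * (1 / κ) ^ n) * ((Nat.choose k n : ℝ) * (1 - 1 / κ) ^ (k - n)) := by ring
  -- the double-indexed function
  set F : ℕ × ℕ → ℝ := fun p =>
    ((Nat.choose p.2 p.1 : ℝ) * (1 / κ) ^ p.1 * (1 - 1 / κ) ^ (p.2 - p.1) * y p.2) * x p.1
    with hFdef
  -- bound on row tsums
  have hrowsum : ∀ n, Summable (fun k => |F (n, k)|) := by
    intro n
    have : (fun k => |F (n, k)|) = fun k =>
        |(Nat.choose k n : ℝ) * (1 / κ) ^ n * (1 - 1 / κ) ^ (k - n) * y k| * |x n| := by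
      funext k; rw [hFdef]; exact abs_mul _ _
    rw [this]
    exact (h1 n).mul_right _
  have hrowbound : ∀ n, (∑' k, |F (n, k)|) ≤ (C * κ) * |x n| := by
    intro n
    have hb : ∀ k, |F (n, k)| ≤
        ((C * (1 / κ) ^ n) * ((Nat.choose k n : ℝ) * (1 - 1 / κ) ^ (k - n))) * |x n| := by
      intro k
      rw [hFdef, abs_mul]
      apply mul_le_mul_of_nonneg_right _ (abs_nonneg _)
      rw [abs_mul, abs_mul, abs_mul]
      rw [abs_of_nonneg (by positivity : (0:ℝ) ≤ (Nat.choose k n : ℝ)),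
        abs_of_nonneg (by positivity : (0:ℝ) ≤ (1/κ) ^ n),
        abs_of_nonneg (pow_nonneg hq0 _)]
      calc (Nat.choose k n : ℝ) * (1 / κ) ^ n * (1 - 1 / κ) ^ (k - n) * |y k|
          ≤ (Nat.choose k n : ℝ) * (1 / κ) ^ n * (1 - 1 / κ) ^ (k - n) * C :=
            mul_le_mul_of_nonneg_left (hC k) (by positivity)
        _ = (C * (1 / κ) ^ n) * ((Nat.choose k n : ℝ) * (1 - 1 / κ) ^ (k - n)) := by ring
    have hgs : Summable (fun k =>
        ((C * (1 / κ) ^ n) * ((Nat.choose k n : ℝ) * (1 - 1 / κ) ^ (k - n))) * |x n|) :=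
      (((hNB n).summable).mul_left _).mul_right _
    calc (∑' k, |F (n, k)|)
        ≤ ∑' k, ((C * (1 / κ) ^ n) * ((Nat.choose k n : ℝ) * (1 - 1 / κ) ^ (k - n))) * |x n| :=
          Summable.tsum_le_tsum hb (hrowsum n) hgs
      _ = ((C * (1 / κ) ^ n) * κ ^ (n + 1)) * |x n| := by
          rw [tsum_mul_right, ((hNB n).mul_left (C * (1 / κ) ^ n)).tsum_eq]
      _ = (C * κ) * |x n| := by
          congr 1
          rw [mul_assoc, div_pow, one_pow, pow_succ]
          field_simp
      _ ≤ (C * κ) * |x n| := le_refl _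
  -- absolute summability of F
  have hFabs : Summable (fun p : ℕ × ℕ => |F p|) := by
    rw [summable_prod_of_nonneg (fun p => abs_nonneg _)]
    constructor
    · exact hrowsum
    · apply Summable.of_nonneg_of_le (fun n => tsum_nonneg (fun k => abs_nonneg _)) hrowbound
      exact hx.mul_left _
  have hF : Summable F := by
    apply Summable.of_abs hFabs
  -- row tsums give thinR * x
  have hrowF : ∀ n, ∑' k, F (n, k) = thinR (1 / κ) y n * x n := by
    intro n
    rw [thinR, ← tsum_mul_right]
  -- column tsums give κ * (y k * ampR κ x k)
  have hcolF : ∀ k, ∑' n, F (n, k) = κ * (y k * ampR κ x k) := by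
    intro k
    have hfin : ∀ n ∉ Finset.range (k + 1), F (n, k) = 0 := by
      intro n hn
      rw [Finset.mem_range, not_lt] at hn
      rw [hFdef]
      simp only
      rw [Nat.choose_eq_zero_of_lt (by omega)]
      simp
    rw [tsum_eq_sum hfin, ampR, Finset.mul_sum, Finset.mul_sum]
    apply Finset.sum_congr rfl
    intro n hn
    rw [Finset.mem_range] at hn
    have hnk : n ≤ k := by omega
    rw [hFdef]
    simp only
    have e1 : (1 - 1 / κ) ^ (k - n) = (κ - 1) ^ (k - n) * (1 / κ) ^ (k - n) := by
      rw [← mul_pow]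
      congr 1
      field_simp
    have e2 : (1 / κ : ℝ) ^ n * (1 / κ) ^ (k - n) = (1 / κ) ^ k := by
      rw [← pow_add]
      congr 1
      omega
    have e3 : κ * κ⁻¹ ^ (k + 1) = (1 / κ) ^ k := by
      rw [pow_succ, one_div, ← mul_assoc, mul_comm κ]
      rw [mul_assoc, mul_inv_cancel₀ (ne_of_gt hκ0), mul_one]
    rw [e1]
    have : (Nat.choose k n : ℝ) * (1 / κ) ^ n * ((κ - 1) ^ (k - n) * (1 / κ) ^ (k - n)) * y k * x n
        = (Nat.choose k n : ℝ) * (κ - 1) ^ (k - n) * (1 / κ) ^ k * y k * x n := by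
      rw [← e2]; ring
    rw [this, ← e3]
    ring
  -- summability of fibers of F
  have hFcol : ∀ k, Summable (fun n => F (n, k)) := by
    intro k
    apply summable_of_finite_support
    apply Set.Finite.subset (Set.finite_Iio (k + 1))
    intro n hn
    simp only [Function.mem_support] at hn
    by_contra h
    simp only [Set.mem_Iio, not_lt] at h
    apply hn
    rw [hFdef]
    simp only
    rw [Nat.choose_eq_zero_of_lt (by omega)]
    simp
  have hFrow : ∀ n, Summable (fun k => F (n, k)) := fun n => (hrowsum n).of_abs
  -- second conjunct
  have h2 : Summable (fun k => |y k * ampR κ x k|) := by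
    have hFabs' : Summable (fun p : ℕ × ℕ => |F (p.2, p.1)|) :=
      ((Equiv.prodComm ℕ ℕ).summable_iff (f := fun p => |F p|)).mpr hFabs
    have hcolabs : Summable (fun k => ∑' n, |F (n, k)|) := by
      have := (summable_prod_of_nonneg
        (f := fun p : ℕ × ℕ => |F (p.2, p.1)|) (fun p => abs_nonneg _)).mp hFabs'
      exact this.2
    refine Summable.of_nonneg_of_le (fun k => abs_nonneg _) (fun k => ?_)
      (hcolabs.mul_left κ⁻¹)
    have : y k * ampR κ x k = κ⁻¹ * ∑' n, F (n, k) := by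
      rw [hcolF k, ← mul_assoc, inv_mul_cancel₀ (ne_of_gt hκ0), one_mul]
    rw [this, abs_mul, abs_of_nonneg (by positivity : (0:ℝ) ≤ κ⁻¹)]
    apply mul_le_mul_of_nonneg_left _ (by positivity)
    have hcs : Summable (fun n => |F (n, k)|) :=
      ((summable_prod_of_nonneg
        (f := fun p : ℕ × ℕ => |F (p.2, p.1)|) (fun p => abs_nonneg _)).mp hFabs').1 k
    have hn : Summable (fun n => ‖F (n, k)‖) := by
      simp only [Real.norm_eq_abs]; exact hcs
    have := norm_tsum_le_tsum_norm (f := fun n => F (n, k)) hn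
    simp only [Real.norm_eq_abs] at this
    exact this
  -- third conjunct
  have h3 : Summable (fun n => |thinR (1 / κ) y n * x n|) := by
    have hrowabs : Summable (fun n => ∑' k, |F (n, k)|) :=
      ((summable_prod_of_nonneg (fun p => abs_nonneg _)).mp hFabs).2
    apply Summable.of_nonneg_of_le (fun n => abs_nonneg _) _ hrowabs
    intro n
    rw [← hrowF n]
    have hn : Summable (fun k => ‖F (n, k)‖) := by
      simp only [Real.norm_eq_abs]; exact hrowsum n
    have := norm_tsum_le_tsum_norm (f := fun k => F (n, k)) hn
    simp only [Real.norm_eq_abs] at this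
    exact this
  refine ⟨h1, h2, h3, ?_⟩
  -- main equality
  have hL : ∑' k, y k * ampR κ x k = κ⁻¹ * ∑' p : ℕ × ℕ, F p := by
    have hswap : Summable (fun p : ℕ × ℕ => F (p.2, p.1)) :=
      ((Equiv.prodComm ℕ ℕ).summable_iff (f := F)).mpr hF
    have := Summable.tsum_prod' hswap hFcol
    have heq : ∑' p : ℕ × ℕ, F (p.2, p.1) = ∑' p : ℕ × ℕ, F p :=
      (Equiv.prodComm ℕ ℕ).tsum_eq F
    calc ∑' k, y k * ampR κ x k
        = ∑' k, κ⁻¹ * ∑' n, F (n, k) := by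
          apply tsum_congr
          intro k
          rw [hcolF k, ← mul_assoc, inv_mul_cancel₀ (ne_of_gt hκ0), one_mul]
      _ = κ⁻¹ * ∑' k, ∑' n, F (n, k) := by rw [tsum_mul_left]
      _ = κ⁻¹ * ∑' p : ℕ × ℕ, F (p.2, p.1) := by rw [← this]
      _ = κ⁻¹ * ∑' p : ℕ × ℕ, F p := by rw [heq]
  have hR : ∑' n, thinR (1 / κ) y n * x n = ∑' p : ℕ × ℕ, F p := by
    rw [Summable.tsum_prod' hF hFrow]
    exact (tsum_congr hrowF).symm
  rw [hL, hR, ← mul_assoc, mul_inv_cancel₀ (ne_of_gt hκ0), one_mul]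
end

section
/- Let x : ℕ → ℝ be a nonzero finitely supported sequence with x_n ≥ 0 for all n. Then for every a ∈ (0,1), the function a ↦ a · ln(∑_{n} x_n^{1/a}) is differentiable at a, and its derivative equals the Shannon entropy −∑_{n} q_n ln q_n of the normalized distribution q_n = x_n^{1/a} / (∑_{m} x_m^{1/a}) (with the convention 0·ln 0 = 0 and 0^c = 0 for c > 0). -/
open Real Filter

theorem deriv_log_norm_eq_entropy (x : ℕ → ℝ) (hx0 : x ≠ 0)
    (hfin : ∃ N, ∀ n ≥ N, x n = 0) (hnn : ∀ n, 0 ≤ x n)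
    (a : ℝ) (ha : a ∈ Set.Ioo (0 : ℝ) 1) :
    HasDerivAt (fun b : ℝ => b * Real.log (∑' n : ℕ, x n ^ (1 / b)))
      (-∑' n : ℕ, (x n ^ (1 / a) / ∑' m : ℕ, x m ^ (1 / a)) *
        Real.log (x n ^ (1 / a) / ∑' m : ℕ, x m ^ (1 / a))) a := by
  obtain ⟨N, hN⟩ := hfin
  set s : Finset ℕ := Finset.range N with hs
  have ha0 : (0:ℝ) < a := ha.1
  have ha0' : a ≠ 0 := ha0.ne'
  -- tsum equals finite sum
  have htsum : ∀ b : ℝ, b ≠ 0 → (∑' n : ℕ, x n ^ (1 / b)) = ∑ n ∈ s, x n ^ (1 / b) := by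
    intro b hb
    refine tsum_eq_sum ?_
    intro n hn
    have : x n = 0 := hN n (by simpa [hs, Finset.mem_range, not_lt] using hn)
    rw [this, Real.zero_rpow (one_div_ne_zero hb)]
  set S : ℝ := ∑ n ∈ s, x n ^ (1 / a) with hSdef
  have hSpos : 0 < S := by
    obtain ⟨n, hn⟩ : ∃ n, x n ≠ 0 := by
      by_contra h
      push_neg at h
      exact hx0 (funext h)
    have hxn : 0 < x n := lt_of_le_of_ne (hnn n) (Ne.symm hn)
    have hns : n ∈ s := by
      simp only [hs, Finset.mem_range]
      by_contra h
      exact hn (hN n (not_lt.mp h))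
    exact Finset.sum_pos' (fun m _ => Real.rpow_nonneg (hnn m) _)
      ⟨n, hns, Real.rpow_pos_of_pos hxn _⟩
  set T : ℝ := ∑ n ∈ s, x n ^ (1 / a) * Real.log (x n) with hTdef
  -- derivative of each term
  have hterm : ∀ n : ℕ, HasDerivAt (fun b : ℝ => x n ^ (1 / b))
      (x n ^ (1 / a) * Real.log (x n) * (-(a ^ 2)⁻¹)) a := by
    intro n
    rcases (hnn n).eq_or_lt with h0 | hpos
    · have heq : (fun b : ℝ => x n ^ (1 / b)) =ᶠ[nhds a] fun _ => (0:ℝ) := by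
        filter_upwards [eventually_ne_nhds ha0'] with b hb
        rw [← h0, Real.zero_rpow (one_div_ne_zero hb)]
      have : HasDerivAt (fun _ : ℝ => (0:ℝ)) 0 a := hasDerivAt_const a 0
      have h := this.congr_of_eventuallyEq heq
      have : x n ^ (1 / a) * Real.log (x n) * (-(a ^ 2)⁻¹) = 0 := by
        rw [← h0, Real.zero_rpow (one_div_ne_zero ha0'), zero_mul, zero_mul]
      rwa [this]
    · have h1 : HasDerivAt (fun y : ℝ => x n ^ y)
        (x n ^ (1 / a) * Real.log (x n)) (1 / a) :=
        (Real.hasStrictDerivAt_const_rpow hpos (1 / a)).hasDerivAt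
      have h2 : HasDerivAt (fun b : ℝ => 1 / b) (-(a ^ 2)⁻¹) a := by
        simpa [one_div] using hasDerivAt_inv ha0'
      exact h1.comp a h2
  have hS : HasDerivAt (fun b : ℝ => ∑ n ∈ s, x n ^ (1 / b))
      (-(a ^ 2)⁻¹ * T) a := by
    have := HasDerivAt.fun_sum (fun n _ => hterm n)
      (u := s)
    refine this.congr_deriv ?_
    rw [hTdef, Finset.mul_sum]
    exact Finset.sum_congr rfl fun n _ => by ring
  have hlog : HasDerivAt (fun b : ℝ => Real.log (∑ n ∈ s, x n ^ (1 / b)))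
      ((-(a ^ 2)⁻¹ * T) / S) a := hS.log hSpos.ne'
  have hg := (hasDerivAt_id a).mul hlog
  -- transfer to original function
  have heq : (fun b : ℝ => b * Real.log (∑' n : ℕ, x n ^ (1 / b)))
      =ᶠ[nhds a] fun b : ℝ => b * Real.log (∑ n ∈ s, x n ^ (1 / b)) := by
    filter_upwards [eventually_ne_nhds ha0'] with b hb
    rw [htsum b hb]
  have hmain := hg.congr_of_eventuallyEq heq
  -- value equality
  have hSval : (∑' m : ℕ, x m ^ (1 / a)) = S := htsum a ha0'
  have hent : (∑' n : ℕ, (x n ^ (1 / a) / ∑' m : ℕ, x m ^ (1 / a)) *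
      Real.log (x n ^ (1 / a) / ∑' m : ℕ, x m ^ (1 / a)))
      = ∑ n ∈ s, (x n ^ (1 / a) / S) * Real.log (x n ^ (1 / a) / S) := by
    rw [hSval]
    refine tsum_eq_sum ?_
    intro n hn
    have : x n = 0 := hN n (by simpa [hs, Finset.mem_range, not_lt] using hn)
    rw [this, Real.zero_rpow (one_div_ne_zero ha0'), zero_div, zero_mul]
  have hsum_eq : ∑ n ∈ s, (x n ^ (1 / a) / S) * Real.log (x n ^ (1 / a) / S)
      = (1 / (S * a)) * T - Real.log S := by
    have hstep : ∀ n ∈ s, (x n ^ (1 / a) / S) * Real.log (x n ^ (1 / a) / S)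
        = (1 / (S * a)) * (x n ^ (1 / a) * Real.log (x n))
          - (x n ^ (1 / a) / S) * Real.log S := by
      intro n _
      rcases (hnn n).eq_or_lt with h0 | hpos
      · rw [← h0, Real.zero_rpow (one_div_ne_zero ha0')]
        simp
      · have hp : (0:ℝ) < x n ^ (1 / a) := Real.rpow_pos_of_pos hpos _
        rw [Real.log_div hp.ne' hSpos.ne', Real.log_rpow hpos]
        field_simp
    rw [Finset.sum_congr rfl hstep, Finset.sum_sub_distrib, ← Finset.mul_sum, ← hTdef,
      ← Finset.sum_mul, ← Finset.sum_div, ← hSdef, div_self hSpos.ne', one_mul]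
  rw [hent, hsum_eq]
  refine hmain.congr_deriv ?_
  rw [← hSdef, id_eq]
  field_simp
  ring
end
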